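/- Let M be a matroid on ground set S of rank n, and A an n×n matroidal Latin square over M. Suppose T is a maximal independent partial transversal of size t occupying the first t diagonal positions, and let T_E be the minimal subset of T spanning all entries in rows and columns of index > t. Then |T_E| ≥ n − t and |T \ T_E| ≤ 2t − n. -/

import Mathlib

/-- `A` is a matroidal Latin square of degree `n` over the matroid `M`. -/
def IsMLS {α : Type*} (M : Matroid α) (n : ℕ) (A : Fin n → Fin n → α) : Prop :=
  (∀ i, Function.Injective (A i) ∧ M.IsBase (Set.range (A i))) ∧
  (∀ j, Function.Injective (fun i => A i j) ∧ M.IsBase (Set.range (fun i => A i j)))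

theorem stmt_16 {α : Type*} (M : Matroid α) (n : ℕ) (A : Fin n → Fin n → α)
    (hA : IsMLS M n A) (t : ℕ) (ht : t ≤ n)
    (T : Set α) (hTdef : T = {x | ∃ i : Fin n, (i : ℕ) < t ∧ x = A i i})
    -- the first `t` diagonal cells form an independent partial transversal
    (hinj : ∀ i j : Fin n, (i : ℕ) < t → (j : ℕ) < t → A i i = A j j → i = j)
    (hT : M.Indep T)
    -- maximality of the transversal
    (hmax : ¬∃ i j : Fin n, t ≤ (i : ℕ) ∧ t ≤ (j : ℕ) ∧
      A i j ∉ T ∧ M.Indep (insert (A i j) T))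
    (E : Set α) (hEdef : E = {x | ∃ i j : Fin n, t ≤ (i : ℕ) ∧ t ≤ (j : ℕ) ∧ x = A i j})
    -- `T_E` is the minimal subset of `T` spanning `E`
    (TE : Set α) (hTE : TE ⊆ T) (hspan : E ⊆ M.closure TE)
    (hmin : ∀ T' ⊆ T, E ⊆ M.closure T' → TE ⊆ T') :
    (n : ℤ) - t ≤ TE.ncard ∧ ((T \ TE).ncard : ℤ) ≤ 2 * t - n := by
  classical
  -- T is a finite set of cardinality at most t
  have hTim : T = (fun i : Fin n => A i i) '' {i : Fin n | (i : ℕ) < t} := by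
    rw [hTdef]; ext x
    simp only [Set.mem_setOf_eq, Set.mem_image]
    exact ⟨fun ⟨i, h1, h2⟩ => ⟨i, h1, h2.symm⟩, fun ⟨i, h1, h2⟩ => ⟨i, h1, h2.symm⟩⟩
  have hTfin : T.Finite := by rw [hTim]; exact (Set.toFinite _).image _
  have hTcard : T.ncard ≤ t := by
    rw [hTim]
    refine le_trans (Set.ncard_image_le (Set.toFinite _)) ?_
    have hval : {i : Fin n | (i : ℕ) < t}.ncard
        = (Fin.val '' {i : Fin n | (i : ℕ) < t}).ncard :=
      (Set.ncard_image_of_injOn (Set.injOn_of_injective Fin.val_injective)).symm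
    rw [hval]
    have hsub : Fin.val '' {i : Fin n | (i : ℕ) < t} ⊆ ↑(Finset.range t) := by
      rintro _ ⟨i, hi, rfl⟩; simpa using hi
    refine le_trans (Set.ncard_le_ncard hsub (Set.toFinite _)) ?_
    rw [Set.ncard_coe_finset, Finset.card_range]
  -- main bound : TE.ncard ≥ n - t
  have hmain : (n : ℤ) - t ≤ TE.ncard := by
    rcases Nat.lt_or_ge t n with hlt | hge
    · -- pick row i = t
      set i : Fin n := ⟨t, hlt⟩ with hi
      set S : Set α := A i '' {j : Fin n | t ≤ (j : ℕ)} with hS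
      have hSE : S ⊆ E := by
        rintro _ ⟨j, hj, rfl⟩
        rw [hEdef]
        exact ⟨i, j, le_refl t, hj, rfl⟩
      have hSindep : M.Indep S := by
        refine ((hA.1 i).2.indep).subset ?_
        rintro _ ⟨j, _, rfl⟩; exact ⟨j, rfl⟩
      have hScard : S.ncard = n - t := by
        rw [hS, Set.ncard_image_of_injOn (Set.injOn_of_injective (hA.1 i).1)]
        have : {j : Fin n | t ≤ (j : ℕ)} = ↑(Finset.Ici i) := by
          ext j; simp [hi, Fin.le_def]
        rw [this, Set.ncard_coe_finset, Fin.card_Ici]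
      -- extend S to a basis of the closure of TE
      have hTEindep : M.Indep TE := hT.subset hTE
      obtain ⟨J, hJ, hSJ⟩ := hSindep.subset_isBasis_of_subset
        (hSE.trans hspan) (M.closure_subset_ground TE)
      have hJcard : J.encard = TE.encard :=
        hJ.encard_eq_encard hTEindep.isBasis_closure
      have hle : S.encard ≤ TE.encard := hJcard ▸ Set.encard_le_encard hSJ
      have hTEfin : TE.Finite := hTfin.subset hTE
      have hle' : S.ncard ≤ TE.ncard := by
        rw [Set.ncard_def, Set.ncard_def]
        exact ENat.toNat_le_toNat hle hTEfin.encard_lt_top.ne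
      have := hScard ▸ hle'
      omega
    · have : (0:ℤ) ≤ TE.ncard := Int.ofNat_nonneg _
      omega
  refine ⟨hmain, ?_⟩
  have hdiff : (T \ TE).ncard = T.ncard - TE.ncard := Set.ncard_diff hTE (hTfin.subset hTE)
  have hTEle : TE.ncard ≤ T.ncard := Set.ncard_le_ncard hTE hTfin
  omega
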